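/- For fixed x ∈ ℂ \ ℝ₋ (the complex plane minus the closed negative real axis), the functions e_c^{(h)+}(x) := h^c · Γ(x/h)/Γ(x/h - c) converge to x^c as h → 0⁺, uniformly for c in any closed disk D(0,r) in ℂ. -/

import Mathlib

open Filter Topology Complex Finset

/-- Lower bound along the ray: for `x` in the slit plane there is `m > 0` with
`m * (|x| + t) ≤ |x + t|` for all `t ≥ 0`. -/
lemma ray_lower_bound (x : ℂ) (hx : x ∈ Complex.slitPlane) :
    ∃ m : ℝ, 0 < m ∧ m ≤ 1 ∧ ∀ t : ℝ, 0 ≤ t → m * (Norm.norm x + t) ≤ Norm.norm (x + t) := by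
  have hx0 : x ≠ 0 := Complex.slitPlane_ne_zero hx
  have hax : 0 < Norm.norm x := norm_pos_iff.mpr hx0
  have habs : ∀ t : ℝ, (Norm.norm (x + t))^2 = (x.re + t)^2 + x.im^2 := by
    intro t
    rw [← Complex.normSq_eq_norm_sq, Complex.normSq_apply]
    simp [Complex.add_re, Complex.add_im]
    ring
  have hx2 : (Norm.norm x)^2 = x.re^2 + x.im^2 := by
    rw [← Complex.normSq_eq_norm_sq, Complex.normSq_apply]; ring
  rcases le_or_gt 0 x.re with hre | hre
  · refine ⟨1/2, by norm_num, by norm_num, fun t ht => ?_⟩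
    have h1 : (1/2 * (Norm.norm x + t))^2 ≤ (Norm.norm (x + t))^2 := by
      rw [habs t]
      nlinarith [hx2, sq_nonneg (Norm.norm x - t), hax.le, mul_nonneg hre ht]
    have h2 : (0:ℝ) ≤ 1/2 * (Norm.norm x + t) := by positivity
    nlinarith [norm_nonneg (x + t)]
  · have him : x.im ≠ 0 := by
      rcases Complex.mem_slitPlane_iff.mp hx with h | h
      · linarith
      · exact h
    have hb : 0 < |x.im| := abs_pos.mpr him
    refine ⟨min (1/3) (|x.im| / (3 * Norm.norm x)), lt_min (by norm_num) (by positivity),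
      min_le_of_left_le (by norm_num), fun t ht => ?_⟩
    rcases le_or_gt t (2 * Norm.norm x) with h2 | h2
    · calc min (1/3) (|x.im| / (3 * Norm.norm x)) * (Norm.norm x + t)
          ≤ (|x.im| / (3 * Norm.norm x)) * (3 * Norm.norm x) := by
            apply mul_le_mul (min_le_right _ _) (by linarith) (by linarith) (by positivity)
        _ = |x.im| := by field_simp
        _ ≤ Norm.norm (x + t) := by
            have := Complex.abs_im_le_norm (x + t)
            simpa [Complex.add_im] using this
    · calc min (1/3) (|x.im| / (3 * Norm.norm x)) * (Norm.norm x + t)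
          ≤ (1/3) * (Norm.norm x + t) := by
            apply mul_le_mul_of_nonneg_right (min_le_left _ _) (by linarith)
        _ ≤ t - Norm.norm x := by linarith
        _ ≤ Norm.norm (x + t) := by
            have h3 : Norm.norm ((t:ℂ)) - Norm.norm (-x) ≤ Norm.norm ((t:ℂ) - -x) :=
              norm_sub_norm_le ((t:ℂ)) (-x)
            have ht' : Norm.norm ((t:ℂ)) = t := by
              rw [Complex.norm_real, Real.norm_eq_abs]; exact abs_of_nonneg ht
            simpa [ht', abs_of_nonneg ht, sub_neg_eq_add, add_comm] using h3

/-- Telescoping step for the logarithm. -/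
lemma log_step {w : ℂ} (hw : w.im ≠ 0 ∨ 0 < w.re) :
    Complex.log (w + 1) - Complex.log w = Complex.log (1 + 1/w) := by
  have hw0 : w ≠ 0 := by
    intro h; rcases hw with h' | h' <;> simp [h] at h'
  have hnsq : 0 < Complex.normSq w := Complex.normSq_pos.mpr hw0
  have him : (1 + 1/w).im = -w.im / Complex.normSq w := by
    rw [Complex.add_im, Complex.one_im, one_div, Complex.inv_im]; ring
  have h10 : (1 : ℂ) + 1/w ≠ 0 := by
    rcases hw with h' | h'
    · intro h
      have h2 : -w.im / Complex.normSq w = 0 := by rw [← him, h]; simp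
      rcases div_eq_zero_iff.mp h2 with h3 | h3
      · exact h' (by linarith [neg_eq_zero.mp h3])
      · exact hnsq.ne' h3
    · -- w.re > 0; then re (1 + 1/w) > 0
      intro h
      have hre : (1 + 1/w).re = 1 + w.re / Complex.normSq w := by
        simp [Complex.add_re, Complex.div_re, Complex.one_re, Complex.one_im]
      have : (1 + 1/w).re = 0 := by rw [h]; simp
      rw [hre] at this
      have : w.re / Complex.normSq w = -1 := by linarith
      nlinarith [div_nonneg h'.le hnsq.le]
  have key : w + 1 = w * (1 + 1/w) := by field_simp
  have harg : Complex.arg w + Complex.arg (1 + 1/w) ∈ Set.Ioc (-Real.pi) Real.pi := by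
    rcases lt_trichotomy w.im 0 with h' | h' | h'
    · have h1 : Complex.arg w < 0 := Complex.arg_neg_iff.mpr h'
      have h2 : -Real.pi < Complex.arg w := Complex.neg_pi_lt_arg w
      have h3 : 0 ≤ Complex.arg (1 + 1/w) := by
        apply Complex.arg_nonneg_iff.mpr
        rw [him]
        exact div_nonneg (by linarith) hnsq.le
      have h4 : Complex.arg (1 + 1/w) < Real.pi := by
        apply Complex.arg_lt_pi_iff.mpr
        right; rw [him]
        simp only [ne_eq, div_eq_zero_iff, neg_eq_zero]
        push_neg
        exact ⟨h'.ne, hnsq.ne'⟩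
      constructor <;> linarith
    · have hre : 0 < w.re := by
        rcases hw with h'' | h''
        · exact absurd h' h''
        · exact h''
      have h1 : Complex.arg w = 0 := Complex.arg_eq_zero_iff.mpr ⟨hre.le, h'⟩
      have h2 : Complex.arg (1 + 1/w) = 0 := by
        apply Complex.arg_eq_zero_iff.mpr
        constructor
        · have : (1 + 1/w).re = 1 + w.re / Complex.normSq w := by
            simp [Complex.add_re, Complex.div_re, Complex.one_re, Complex.one_im]
          rw [this]; positivity
        · rw [him, h']; simp
      rw [h1, h2]
      constructor
      · simpa using Real.pi_pos
      · simp [Real.pi_pos.le]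
    · have h1 : 0 ≤ Complex.arg w := Complex.arg_nonneg_iff.mpr h'.le
      have h2 : Complex.arg w < Real.pi := by
        apply Complex.arg_lt_pi_iff.mpr; right; exact h'.ne'
      have h3 : Complex.arg (1 + 1/w) < 0 := by
        apply Complex.arg_neg_iff.mpr
        rw [him]
        apply div_neg_of_neg_of_pos (by linarith) hnsq
      have h4 : -Real.pi < Complex.arg (1 + 1/w) := Complex.neg_pi_lt_arg _
      constructor <;> linarith
  rw [key, Complex.log_mul hw0 h10 harg]
  ring

/-- Telescoping bound for a sum of inverse squares. -/
lemma sum_inv_sq_le (a : ℝ) (ha : 2 ≤ a) (n : ℕ) :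
    ∑ j ∈ Finset.range n, ((a + j)^2)⁻¹ ≤ 2 / a := by
  have key : ∀ j ∈ Finset.range n,
      ((a + j)^2)⁻¹ ≤ (fun k : ℕ => (a - 1 + k)⁻¹) j - (fun k : ℕ => (a - 1 + k)⁻¹) (j+1) := by
    intro j _
    have hj : (0:ℝ) ≤ (j:ℝ) := Nat.cast_nonneg j
    have h1 : (0:ℝ) < a - 1 + j := by linarith
    have h2 : (0:ℝ) < a + j := by linarith
    simp only [Nat.cast_add, Nat.cast_one]
    have heq : (a - 1 + (j:ℝ))⁻¹ - (a - 1 + ((j:ℝ)+1))⁻¹ = ((a - 1 + j) * (a + j))⁻¹ := by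
      rw [show a - 1 + ((j:ℝ)+1) = a + j by ring]
      field_simp
      ring
    rw [heq]
    apply inv_anti₀ (by positivity)
    nlinarith
  calc ∑ j ∈ Finset.range n, ((a + j)^2)⁻¹
      ≤ ∑ j ∈ Finset.range n,
        ((fun k : ℕ => (a - 1 + k)⁻¹) j - (fun k : ℕ => (a - 1 + k)⁻¹) (j+1)) :=
        Finset.sum_le_sum key
    _ = (a - 1 + (0:ℕ))⁻¹ - (a - 1 + (n:ℕ))⁻¹ := Finset.sum_range_sub' _ n
    _ ≤ (a - 1)⁻¹ := by
        have hn : (0:ℝ) ≤ (n:ℝ) := Nat.cast_nonneg n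
        have hpos : (0:ℝ) < a - 1 + (n:ℕ) := by push_cast; linarith
        have : (0:ℝ) ≤ (a - 1 + (n:ℕ))⁻¹ := (inv_nonneg).mpr hpos.le
        simp only [Nat.cast_zero, add_zero]
        linarith
    _ ≤ 2 / a := by
        rw [inv_eq_one_div, div_le_div_iff₀ (by linarith) (by linarith)]
        linarith

open Complex in
set_option maxHeartbeats 1600000 in
/-- Core estimate: quantitative form of `Γ(z)/Γ(z-c) ~ z^c`. -/
lemma core_estimate (R m : ℝ) (hR : 1 ≤ R) (hm0 : 0 < m) (hm1 : m ≤ 1) (z : ℂ)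
    (hz : ∀ t : ℝ, 0 ≤ t → m * (Norm.norm z + t) ≤ Norm.norm (z + t))
    (him : z.im ≠ 0 ∨ 0 < z.re)
    (hbig : 4 * (R + R^2) ≤ m^2 * Norm.norm z)
    (c : ℂ) (hc : ‖c‖ ≤ R) :
    ‖Complex.Gamma z / Complex.Gamma (z - c) * z ^ (-c) - 1‖
      ≤ 8 * (R + R^2) / (m^2 * Norm.norm z) := by
  set az := Norm.norm z with haz_def
  have hR0 : (0:ℝ) < R := by linarith
  have hm2 : (0:ℝ) < m^2 := by positivity
  have haz8 : 8 ≤ az := by nlinarith [norm_nonneg z, sq_nonneg m]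
  have haz0 : (0:ℝ) < az := by linarith
  have hz0 : z ≠ 0 := by
    intro h
    rw [haz_def, h] at haz0
    simp at haz0
  have hmaz : 4 * R ≤ m * az := by nlinarith [norm_nonneg z]
  have hzj : ∀ j : ℕ, m * (az + j) ≤ Norm.norm (z + j) := by
    intro j
    have := hz j (Nat.cast_nonneg j)
    push_cast at this ⊢
    exact this
  have hazj : ∀ j : ℕ, (0:ℝ) < m * (az + j) := by
    intro j; have : (0:ℝ) ≤ j := Nat.cast_nonneg j; positivity
  have hzjpos : ∀ j : ℕ, (0:ℝ) < Norm.norm (z + j) := fun j => lt_of_lt_of_le (hazj j) (hzj j)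
  have hzjne : ∀ j : ℕ, z + (j:ℂ) ≠ 0 := by
    intro j h
    have := hzjpos j; rw [h] at this; simp at this
  have hinvj : ∀ j : ℕ, ‖1/(z + (j:ℂ))‖ ≤ 1/(m * (az + j)) := by
    intro j
    rw [norm_div, norm_one]
    exact one_div_le_one_div_of_le (hazj j) (hzj j)
  have hmazj : ∀ j : ℕ, m * az ≤ m * (az + j) := by
    intro j
    have : (0:ℝ) ≤ j := Nat.cast_nonneg j
    nlinarith
  have hinv_quarter : ∀ j : ℕ, ‖1/(z + (j:ℂ))‖ ≤ 1/4 := by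
    intro j
    refine (hinvj j).trans ?_
    rw [div_le_div_iff₀ (hazj j) (by norm_num)]
    have := hmazj j
    nlinarith
  have hcz : ∀ j : ℕ, ‖c/(z + (j:ℂ))‖ ≤ R/(m * (az + j)) := by
    intro j
    rw [norm_div]
    exact div_le_div₀ hR0.le hc (hazj j) (hzj j)
  have hcz_quarter : ∀ j : ℕ, ‖c/(z + (j:ℂ))‖ ≤ 1/4 := by
    intro j
    refine (hcz j).trans ?_
    rw [div_le_div_iff₀ (hazj j) (by norm_num)]
    have := hmazj j
    nlinarith
  have hfac : ∀ j : ℕ, (1:ℂ) - c/(z + (j:ℂ)) ≠ 0 := by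
    intro j h
    have h1 : c/(z + (j:ℂ)) = 1 := by linear_combination -h
    have := hcz_quarter j
    rw [h1] at this
    norm_num at this
  have hGne : Complex.Gamma (z - c) ≠ 0 := by
    apply Complex.Gamma_ne_zero
    intro k hk
    have hck : c = z + k := by linear_combination -hk
    have : ‖c‖ = Norm.norm (z + (k:ℂ)) := by rw [hck]
    have h2 := (hzj k).trans (le_of_eq this.symm)
    have := hmazj k
    nlinarith
  -- per-term error bounds
  have herr : ∀ j : ℕ, ‖Complex.log (z + j + 1) - Complex.log (z + j) - 1/(z + j)‖
      ≤ (1/m^2) * ((az + j)^2)⁻¹ := by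
    intro j
    have him' : (z + (j:ℂ)).im ≠ 0 ∨ 0 < (z + (j:ℂ)).re := by
      rcases him with h | h
      · left; simpa using h
      · right
        have : (z + (j:ℂ)).re = z.re + j := by simp
        rw [this]
        have : (0:ℝ) ≤ j := Nat.cast_nonneg j
        linarith
    have hstep := log_step him'
    have hw : ‖1/(z + (j:ℂ))‖ < 1 := lt_of_le_of_lt (hinv_quarter j) (by norm_num)
    have hb := Complex.norm_log_one_add_sub_self_le hw
    have heq : Complex.log (z + j + 1) - Complex.log (z + j) - 1/(z + j)
        = Complex.log (1 + 1/(z + (j:ℂ))) - 1/(z + (j:ℂ)) := by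
      linear_combination hstep
    rw [heq]
    refine hb.trans ?_
    have h14 := hinv_quarter j
    have hn : (0:ℝ) ≤ ‖1/(z + (j:ℂ))‖ := norm_nonneg _
    have h1 : ‖1/(z + (j:ℂ))‖^2 * (1 - ‖1/(z + (j:ℂ))‖)⁻¹ / 2 ≤ ‖1/(z + (j:ℂ))‖^2 := by
      have h2 : (1 - ‖1/(z + (j:ℂ))‖)⁻¹ ≤ 2 := by
        rw [inv_le_iff_one_le_mul₀ (by linarith)]
        linarith
      nlinarith
    refine h1.trans ?_
    have h3 : ‖1/(z + (j:ℂ))‖^2 ≤ (1/(m * (az + j)))^2 := by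
      apply pow_le_pow_left₀ hn (hinvj j)
    refine h3.trans (le_of_eq ?_)
    have haj : (0:ℝ) < az + j := by
      have : (0:ℝ) ≤ (j:ℝ) := Nat.cast_nonneg j
      linarith
    field_simp
  have hE : ∀ j : ℕ, ‖Complex.log (1 - c/(z + j)) + c/(z + j)‖
      ≤ (R^2/m^2) * ((az + j)^2)⁻¹ := by
    intro j
    have hw : ‖-(c/(z + (j:ℂ)))‖ < 1 := by
      rw [norm_neg]; exact lt_of_le_of_lt (hcz_quarter j) (by norm_num)
    have hb := Complex.norm_log_one_add_sub_self_le hw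
    have heq : Complex.log (1 - c/(z + j)) + c/(z + j)
        = Complex.log (1 + -(c/(z + (j:ℂ)))) - -(c/(z + (j:ℂ))) := by
      rw [show (1:ℂ) + -(c/(z + (j:ℂ))) = 1 - c/(z + j) by ring]
      ring
    rw [heq]
    refine hb.trans ?_
    rw [norm_neg]
    have h14 := hcz_quarter j
    have hn : (0:ℝ) ≤ ‖c/(z + (j:ℂ))‖ := norm_nonneg _
    have h1 : ‖c/(z + (j:ℂ))‖^2 * (1 - ‖c/(z + (j:ℂ))‖)⁻¹ / 2 ≤ ‖c/(z + (j:ℂ))‖^2 := by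
      have h2 : (1 - ‖c/(z + (j:ℂ))‖)⁻¹ ≤ 2 := by
        rw [inv_le_iff_one_le_mul₀ (by linarith)]
        linarith
      nlinarith
    refine h1.trans ?_
    have h3 : ‖c/(z + (j:ℂ))‖^2 ≤ (R/(m * (az + j)))^2 := by
      apply pow_le_pow_left₀ hn (hcz j)
    refine h3.trans (le_of_eq ?_)
    have haj : (0:ℝ) < az + j := by
      have : (0:ℝ) ≤ (j:ℝ) := Nat.cast_nonneg j
      linarith
    field_simp
  -- the log-expansion of the GammaSeq ratio
  set T : ℕ → ℂ := fun n => Complex.log n * c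
      + (∑ j ∈ Finset.range (n+1), Complex.log (1 - c/(z + j)))
      - Complex.log z * c with hT_def
  have hTn : ∀ n : ℕ, 1 ≤ n →
      Complex.GammaSeq z n / Complex.GammaSeq (z - c) n * z ^ (-c) = Complex.exp (T n) := by
    intro n hn
    have hn0 : ((n:ℕ):ℂ) ≠ 0 := Nat.cast_ne_zero.mpr (by omega)
    have hzcjne : ∀ j : ℕ, z - c + (j:ℂ) ≠ 0 := by
      intro j h
      have h1 : c = z + j := by linear_combination -h
      have h2 : ‖c‖ = Norm.norm (z + (j:ℂ)) := by rw [h1]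
      have h3 := (hzj j).trans (h2.symm.le)
      have := hmazj j
      nlinarith
    have hfacteq : ∀ j ∈ Finset.range (n+1), (1:ℂ) - c/(z + j) = (z - c + j)/(z + j) := by
      intro j _
      rw [show z - c + (j:ℂ) = (z + j) - c by ring, sub_div, div_self (hzjne j)]
    have hstep1 : Complex.GammaSeq z n / Complex.GammaSeq (z - c) n
        = (n:ℂ)^c * ∏ j ∈ Finset.range (n+1), ((1:ℂ) - c/(z + j)) := by
      rw [Finset.prod_congr rfl hfacteq, Finset.prod_div_distrib]
      rw [Complex.GammaSeq, Complex.GammaSeq]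
      have hnz : (n:ℂ)^z = (n:ℂ)^(z-c) * (n:ℂ)^c := by
        rw [← Complex.cpow_add _ _ hn0]
        ring_nf
      have hfactne : ((Nat.factorial n : ℕ) : ℂ) ≠ 0 := Nat.cast_ne_zero.mpr (Nat.factorial_ne_zero n)
      have hpow : (n:ℂ)^(z-c) ≠ 0 := by
        simp only [ne_eq, Complex.cpow_eq_zero_iff, not_and_or]
        left; exact hn0
      have hprodz : ∏ j ∈ Finset.range (n+1), (z + (j:ℂ)) ≠ 0 :=
        Finset.prod_ne_zero_iff.mpr fun j _ => hzjne j
      have hprodzc : ∏ j ∈ Finset.range (n+1), (z - c + (j:ℂ)) ≠ 0 :=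
        Finset.prod_ne_zero_iff.mpr fun j _ => hzcjne j
      rw [hnz]
      field_simp
    have hstep2 : ∏ j ∈ Finset.range (n+1), ((1:ℂ) - c/(z + j))
        = Complex.exp (∑ j ∈ Finset.range (n+1), Complex.log (1 - c/(z + j))) := by
      rw [Complex.exp_sum]
      exact Finset.prod_congr rfl fun j _ => (Complex.exp_log (hfac j)).symm
    have hstep3 : ((n:ℕ):ℂ)^c = Complex.exp (Complex.log n * c) :=
      Complex.cpow_def_of_ne_zero hn0 c
    have hstep4 : z ^ (-c) = Complex.exp (Complex.log z * (-c)) :=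
      Complex.cpow_def_of_ne_zero hz0 _
    rw [hstep1, hstep2, hstep3, hstep4, ← Complex.exp_add, ← Complex.exp_add]
    congr 1
    simp only [hT_def]
    ring
  have hG : Filter.Tendsto (fun n => Complex.GammaSeq z n / Complex.GammaSeq (z - c) n * z ^ (-c))
      Filter.atTop (nhds (Complex.Gamma z / Complex.Gamma (z - c) * z ^ (-c))) :=
    ((Complex.GammaSeq_tendsto_Gamma z).div (Complex.GammaSeq_tendsto_Gamma (z-c)) hGne).mul_const _
  -- telescoping
  have htel : ∀ n : ℕ, ∑ j ∈ Finset.range (n+1),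
      (Complex.log (z + j + 1) - Complex.log (z + j))
      = Complex.log (z + n + 1) - Complex.log z := by
    intro n
    have h := Finset.sum_range_sub (fun k : ℕ => Complex.log (z + k)) (n+1)
    simp only [Nat.cast_add, Nat.cast_one, Nat.cast_zero, add_zero, ← add_assoc] at h
    exact h
  have hTdecomp : ∀ n : ℕ, T n
      = (Complex.log n - Complex.log (z + n + 1)) * c
      + (∑ j ∈ Finset.range (n+1),
          (Complex.log (z+j+1) - Complex.log (z+j) - 1/(z+j))) * c
      + ∑ j ∈ Finset.range (n+1), (Complex.log (1 - c/(z+j)) + c/(z+j)) := by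
    intro n
    have h1 : ∑ j ∈ Finset.range (n+1), (Complex.log (1 - c/(z+j)) + c/(z+j))
        = (∑ j ∈ Finset.range (n+1), Complex.log (1 - c/(z+j)))
          + c * ∑ j ∈ Finset.range (n+1), 1/(z+j) := by
      rw [Finset.sum_add_distrib, Finset.mul_sum]
      congr 1
      exact Finset.sum_congr rfl fun j _ => (mul_one_div c _).symm
    have h2 : ∑ j ∈ Finset.range (n+1),
        (Complex.log (z+j+1) - Complex.log (z+j) - 1/(z+j))
        = (Complex.log (z + n + 1) - Complex.log z)
          - ∑ j ∈ Finset.range (n+1), 1/(z+j) := by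
      rw [Finset.sum_sub_distrib, htel n]
    rw [h1, h2]
    simp only [hT_def]
    ring
  -- norm bounds for the sums
  have hsumerr : ∀ n : ℕ,
      ‖∑ j ∈ Finset.range (n+1), (Complex.log (z+j+1) - Complex.log (z+j) - 1/(z+j))‖
      ≤ 1/m^2 * (2/az) := by
    intro n
    refine (norm_sum_le _ _).trans ?_
    calc ∑ j ∈ Finset.range (n+1), ‖Complex.log (z+j+1) - Complex.log (z+j) - 1/(z+j)‖
        ≤ ∑ j ∈ Finset.range (n+1), 1/m^2 * ((az+j)^2)⁻¹ :=
          Finset.sum_le_sum fun j _ => herr j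
      _ = 1/m^2 * ∑ j ∈ Finset.range (n+1), ((az+j)^2)⁻¹ := by rw [← Finset.mul_sum]
      _ ≤ 1/m^2 * (2/az) := by
          apply mul_le_mul_of_nonneg_left (sum_inv_sq_le az (by linarith) (n+1)) (by positivity)
  have hsumE : ∀ n : ℕ,
      ‖∑ j ∈ Finset.range (n+1), (Complex.log (1 - c/(z+j)) + c/(z+j))‖
      ≤ R^2/m^2 * (2/az) := by
    intro n
    refine (norm_sum_le _ _).trans ?_
    calc ∑ j ∈ Finset.range (n+1), ‖Complex.log (1 - c/(z+j)) + c/(z+j)‖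
        ≤ ∑ j ∈ Finset.range (n+1), R^2/m^2 * ((az+j)^2)⁻¹ :=
          Finset.sum_le_sum fun j _ => hE j
      _ = R^2/m^2 * ∑ j ∈ Finset.range (n+1), ((az+j)^2)⁻¹ := by rw [← Finset.mul_sum]
      _ ≤ R^2/m^2 * (2/az) := by
          apply mul_le_mul_of_nonneg_left (sum_inv_sq_le az (by linarith) (n+1)) (by positivity)
  -- the boundary term tends to 0
  have hdelta : Filter.Tendsto (fun n : ℕ => ‖Complex.log n - Complex.log (z + n + 1)‖)
      Filter.atTop (nhds 0) := by
    have t0 : Filter.Tendsto (fun n : ℕ => ((z+1)/n : ℂ)) Filter.atTop (nhds 0) := by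
      rw [tendsto_zero_iff_norm_tendsto_zero]
      have heq : (fun n : ℕ => ‖((z+1)/n : ℂ)‖) = fun n : ℕ => Norm.norm (z+1) / n := by
        funext n
        rw [norm_div, Complex.norm_natCast]
      rw [heq]
      exact tendsto_const_div_atTop_nhds_zero_nat _
    have t1 : Filter.Tendsto (fun n : ℕ => Complex.log (1 + (z+1)/n)) Filter.atTop (nhds 0) := by
      have h1 : Filter.Tendsto (fun n : ℕ => (1:ℂ) + (z+1)/n) Filter.atTop (nhds (1+0)) :=
        tendsto_const_nhds.add t0
      rw [add_zero] at h1
      have h2 := h1.clog (by simp [Complex.mem_slitPlane_iff])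
      simpa using h2
    have hsmall : ∀ᶠ n : ℕ in Filter.atTop, ‖((z+1)/n : ℂ)‖ < 1 := by
      have := t0.norm
      simp only [norm_zero] at this
      exact this.eventually_lt_const (by norm_num)
    have heq : ∀ᶠ n : ℕ in Filter.atTop,
        ‖Complex.log (1 + (z+1)/n)‖ = ‖Complex.log n - Complex.log (z + n + 1)‖ := by
      filter_upwards [Filter.eventually_ge_atTop 1, hsmall] with n hn hsm
      have hnR : (0:ℝ) < (n:ℝ) := by positivity
      have hne : (1:ℂ) + (z+1)/n ≠ 0 := by
        intro h
        have : ((z+1)/n : ℂ) = -1 := by linear_combination h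
        rw [this] at hsm
        simp at hsm
      have hnn : ((n:ℕ):ℂ) ≠ 0 := Nat.cast_ne_zero.mpr (by omega)
      have hzn : z + ((n:ℕ):ℂ) + 1 = (((n:ℝ)):ℂ) * (1 + (z+1)/n) := by
        have : ((n:ℕ):ℂ) ≠ 0 := hnn
        push_cast
        field_simp
        ring
      have hlogn : Complex.log ((n:ℕ):ℂ) = ((Real.log n : ℝ) : ℂ) :=
        Complex.natCast_log.symm
      have hkey : Complex.log (z + (n:ℕ) + 1) = Real.log n + Complex.log (1 + (z+1)/n) := by
        rw [hzn, Complex.log_ofReal_mul hnR hne]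
      rw [hkey, hlogn]
      rw [show ((Real.log n : ℝ):ℂ) - (((Real.log n : ℝ):ℂ) + Complex.log (1 + (z+1)/n))
          = -Complex.log (1 + (z+1)/n) by ring, norm_neg]
    have := t1.norm
    simp only [norm_zero] at this
    exact this.congr' heq
  -- assemble the eventual bound
  set B : ℝ := (R + R^2)/m^2 * (2/az) with hB_def
  have hBpos : 0 < B := by
    rw [hB_def]
    positivity
  have hdeltaev : ∀ᶠ n : ℕ in Filter.atTop,
      ‖Complex.log n - Complex.log (z + n + 1)‖ < B/R := by
    apply hdelta.eventually_lt_const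
    positivity
  have hev : ∀ᶠ n : ℕ in Filter.atTop, ‖T n‖ ≤ 2 * B := by
    filter_upwards [hdeltaev] with n h1
    rw [hTdecomp n]
    have e1 : ‖(Complex.log n - Complex.log (z + n + 1)) * c‖ ≤ B := by
      rw [norm_mul]
      calc ‖Complex.log n - Complex.log (z + n + 1)‖ * ‖c‖
          ≤ (B/R) * R := by
            apply mul_le_mul h1.le hc (norm_nonneg _) (by positivity)
        _ = B := by field_simp
    have e2 : ‖(∑ j ∈ Finset.range (n+1),
        (Complex.log (z+j+1) - Complex.log (z+j) - 1/(z+j))) * c‖ ≤ 1/m^2 * (2/az) * R := by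
      rw [norm_mul]
      apply mul_le_mul (hsumerr n) hc (norm_nonneg _) (by positivity)
    have e3 := hsumE n
    have htotal : 1/m^2 * (2/az) * R + R^2/m^2 * (2/az) = B := by
      rw [hB_def]
      ring
    calc ‖(Complex.log n - Complex.log (z + n + 1)) * c
          + (∑ j ∈ Finset.range (n+1),
              (Complex.log (z+j+1) - Complex.log (z+j) - 1/(z+j))) * c
          + ∑ j ∈ Finset.range (n+1), (Complex.log (1 - c/(z+j)) + c/(z+j))‖
        ≤ ‖(Complex.log n - Complex.log (z + n + 1)) * c
          + (∑ j ∈ Finset.range (n+1),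
              (Complex.log (z+j+1) - Complex.log (z+j) - 1/(z+j))) * c‖
          + ‖∑ j ∈ Finset.range (n+1), (Complex.log (1 - c/(z+j)) + c/(z+j))‖ :=
          norm_add_le _ _
      _ ≤ (‖(Complex.log n - Complex.log (z + n + 1)) * c‖
          + ‖(∑ j ∈ Finset.range (n+1),
              (Complex.log (z+j+1) - Complex.log (z+j) - 1/(z+j))) * c‖)
          + ‖∑ j ∈ Finset.range (n+1), (Complex.log (1 - c/(z+j)) + c/(z+j))‖ := by
          have := norm_add_le ((Complex.log n - Complex.log (z + n + 1)) * c)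
            ((∑ j ∈ Finset.range (n+1),
              (Complex.log (z+j+1) - Complex.log (z+j) - 1/(z+j))) * c)
          linarith
      _ ≤ (B + 1/m^2 * (2/az) * R) + R^2/m^2 * (2/az) := by
          have := e1
          have := e2
          have := e3
          linarith
      _ = 2 * B := by
          rw [← htotal]
          ring
  have h2B : 2 * B ≤ 1 := by
    have heq : 2 * B = 4*(R+R^2)/(m^2*az) := by
      rw [hB_def]
      ring
    rw [heq, div_le_one (by positivity)]
    linarith
  have hfinal : ∀ᶠ n : ℕ in Filter.atTop,
      ‖Complex.GammaSeq z n / Complex.GammaSeq (z - c) n * z ^ (-c) - 1‖ ≤ 2*(2*B) := by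
    filter_upwards [hev, Filter.eventually_ge_atTop 1] with n h1 hn
    rw [hTn n hn]
    have hb := Complex.norm_exp_sub_one_le (x := T n)
      (by linarith)
    have : 2 * ‖T n‖ ≤ 2 * (2*B) := by linarith
    linarith
  have hlimle := le_of_tendsto ((hG.sub_const 1).norm) hfinal
  refine hlimle.trans (le_of_eq ?_)
  rw [hB_def]
  field_simp
  ring

set_option maxHeartbeats 800000 in
/-- For `x` off the closed negative real axis, the characters
`e_c^{(h)+}(x) = h^c Γ(x/h)/Γ(x/h - c)` converge to `x^c` as `h → 0⁺`,
uniformly for `c` in any closed disk `D(0,r)`. -/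
theorem character_confluence_plus (x : ℂ) (hx : x ∈ Complex.slitPlane) (r : ℝ) :
    TendstoUniformlyOn
      (fun (h : ℝ) (c : ℂ) =>
        (h : ℂ) ^ c * Complex.Gamma (x / h) / Complex.Gamma (x / h - c))
      (fun c : ℂ => x ^ c)
      (nhdsWithin (0 : ℝ) (Set.Ioi 0))
      (Metric.closedBall (0 : ℂ) r) := by
  rw [Metric.tendstoUniformlyOn_iff]
  intro ε hε
  have hx0 : x ≠ 0 := Complex.slitPlane_ne_zero hx
  have hax : 0 < Norm.norm x := norm_pos_iff.mpr hx0
  obtain ⟨m, hm0, hm1, hm⟩ := ray_lower_bound x hx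
  have hm2 : (0:ℝ) < m^2 := by positivity
  set R := max r 1 with hR_def
  have hR1 : 1 ≤ R := le_max_right r 1
  have hR0 : 0 < R := by linarith
  set K₀ := Real.exp (‖Complex.log x‖ * R) with hK0_def
  have hK0pos : 0 < K₀ := Real.exp_pos _
  set C := 8 * (R + R^2) / m^2 with hC_def
  have hCpos : 0 < C := by positivity
  set T0 := max (4 * (R + R^2) / m^2) (C * K₀ / ε) with hT0_def
  have hT0pos : 0 < T0 := lt_of_lt_of_le (by positivity) (le_max_left _ _)
  set δ := Norm.norm x / (T0 + 1) with hδ_def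
  have hδpos : 0 < δ := by positivity
  filter_upwards [Ioo_mem_nhdsGT_of_mem
    (show (0:ℝ) ∈ Set.Ico 0 δ from ⟨le_refl 0, hδpos⟩)] with h hh c hcball
  obtain ⟨hh0, hhδ⟩ := hh
  have hc : ‖c‖ ≤ R := by
    rw [Metric.mem_closedBall, dist_zero_right] at hcball
    exact hcball.trans (le_max_left r 1)
  set z := x / ((h:ℝ):ℂ) with hz_def
  have hhC : ((h:ℝ):ℂ) ≠ 0 := Complex.ofReal_ne_zero.mpr hh0.ne'
  have hz0 : z ≠ 0 := div_ne_zero hx0 hhC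
  have hazval : Norm.norm z = Norm.norm x / h := by
    rw [hz_def, norm_div, Complex.norm_real, Real.norm_eq_abs, abs_of_pos hh0]
  have hazT : T0 + 1 < Norm.norm z := by
    rw [hazval, lt_div_iff₀ hh0]
    calc (T0+1)*h < (T0+1)*δ := by
          exact mul_lt_mul_of_pos_left hhδ (by positivity)
      _ = Norm.norm x := by
          rw [hδ_def]
          field_simp
  have hzray : ∀ t : ℝ, 0 ≤ t → m * (Norm.norm z + t) ≤ Norm.norm (z + t) := by
    intro t ht
    have h1 := hm (t*h) (by positivity)
    have h2 : Norm.norm (z + (t:ℂ)) = Norm.norm (x + ((t*h:ℝ):ℂ)) / h := by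
      rw [show z + (t:ℂ) = (x + ((t*h:ℝ):ℂ)) / ((h:ℝ):ℂ) by
        rw [hz_def]; push_cast; field_simp]
      rw [norm_div, Complex.norm_real, Real.norm_eq_abs, abs_of_pos hh0]
    rw [h2, hazval, le_div_iff₀ hh0]
    calc m * (Norm.norm x / h + t) * h = m * (Norm.norm x + t*h) := by
          field_simp
      _ ≤ Norm.norm (x + ((t*h:ℝ):ℂ)) := h1
  have hzim : z.im ≠ 0 ∨ 0 < z.re := by
    rcases Complex.mem_slitPlane_iff.mp hx with hre | him'
    · right
      rw [hz_def, Complex.div_ofReal_re]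
      exact div_pos hre hh0
    · left
      rw [hz_def, Complex.div_ofReal_im]
      exact div_ne_zero him' hh0.ne'
  have hbig : 4 * (R + R^2) ≤ m^2 * Norm.norm z := by
    have h4 : 4 * (R + R^2) / m^2 ≤ T0 := le_max_left _ _
    rw [div_le_iff₀ hm2] at h4
    nlinarith
  have hcore := core_estimate R m hR1 hm0 hm1 z hzray hzim hbig c hc
  -- power identity
  have hzlog : Complex.log z = -((Real.log h : ℝ):ℂ) + Complex.log x := by
    rw [hz_def, show x / ((h:ℝ):ℂ) = ((h⁻¹:ℝ):ℂ) * x by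
      rw [Complex.ofReal_inv]; field_simp]
    rw [Complex.log_ofReal_mul (inv_pos.mpr hh0) hx0, Real.log_inv]
    push_cast
    ring
  have hpow : ((h:ℝ):ℂ)^c = x^c * z^(-c) := by
    rw [Complex.cpow_def_of_ne_zero hhC, Complex.cpow_def_of_ne_zero hx0,
      Complex.cpow_def_of_ne_zero hz0, ← Complex.exp_add]
    congr 1
    rw [← Complex.ofReal_log hh0.le, hzlog]
    ring
  have hxpow : ‖x ^ c‖ ≤ K₀ := by
    rw [Complex.cpow_def_of_ne_zero hx0, Complex.norm_exp]
    apply Real.exp_le_exp.mpr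
    calc (Complex.log x * c).re ≤ Norm.norm (Complex.log x * c) := Complex.re_le_norm _
      _ = ‖Complex.log x‖ * ‖c‖ := by rw [norm_mul]
      _ ≤ ‖Complex.log x‖ * R := by
          exact mul_le_mul_of_nonneg_left hc (norm_nonneg _)
  rw [dist_eq_norm]
  have hident : x^c - ((h:ℝ):ℂ)^c * Complex.Gamma z / Complex.Gamma (z - c)
      = -(x^c * (Complex.Gamma z / Complex.Gamma (z - c) * z^(-c) - 1)) := by
    rw [hpow]
    ring
  rw [hident, norm_neg, norm_mul]
  have haz0 : 0 < Norm.norm z := by linarith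
  calc ‖x^c‖ * ‖Complex.Gamma z / Complex.Gamma (z - c) * z^(-c) - 1‖
      ≤ K₀ * (8 * (R + R^2) / (m^2 * Norm.norm z)) := by
        exact mul_le_mul hxpow hcore (norm_nonneg _) hK0pos.le
    _ = C * K₀ / Norm.norm z := by
        rw [hC_def]
        field_simp
    _ < ε := by
        rw [div_lt_iff₀ haz0]
        have hT2 : C * K₀ / ε ≤ T0 := le_max_right _ _
        rw [div_le_iff₀ hε] at hT2
        nlinarith
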